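/- Assume G is a directed po-group and n ≥ 1. Then E₀ is a normal ideal of E = [0̄, u_n] with E₀ ≠ E, and every ideal J of E containing an element not belonging to E₀ equals E. Consequently E₀ is the unique maximal ideal of E (an ideal is maximal if it is proper and every ideal properly containing it equals E). -/

import Mathlib

open Function

variable {I G : Type*}

def kmul [Mul G] (φ : Equiv.Perm I) (p q : ℤ × (I → G)) : ℤ × (I → G) :=
  (p.1 + q.1, fun i => p.2 i * q.2 ((φ ^ p.1) i))

def kone [One G] : ℤ × (I → G) := (0, fun _ => 1)

def kunit [One G] (n : ℤ) : ℤ × (I → G) := (n, fun _ => 1)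

def kle [LE G] (p q : ℤ × (I → G)) : Prop :=
  p.1 < q.1 ∨ (p.1 = q.1 ∧ ∀ i, p.2 i ≤ q.2 i)

def kE [One G] [LE G] (n : ℤ) : Set (ℤ × (I → G)) :=
  {z | kle kone z ∧ kle z (kunit n)}

def kEk [One G] [LE G] (n k : ℤ) : Set (ℤ × (I → G)) :=
  {z | z ∈ kE n ∧ z.1 = k}

/-- An ideal of `E = [0̄, u_n]`: a nonempty subset `J ⊆ E` closed under products
staying below `u_n` and downward closed in `E`. -/
def kIsIdeal [Group G] [PartialOrder G] (φ : Equiv.Perm I) (n : ℤ)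
    (J : Set (ℤ × (I → G))) : Prop :=
  J.Nonempty ∧ J ⊆ kE n ∧
  (∀ a ∈ J, ∀ b ∈ J, kle (kmul φ a b) (kunit n) → kmul φ a b ∈ J) ∧
  (∀ a ∈ kE n, ∀ b ∈ J, kle a b → a ∈ J)

/-- A normal ideal of `E`: for every `z ∈ E`,
`{z*a : a ∈ J, z*a ≤ u_n} = {b*z : b ∈ J, b*z ≤ u_n}`. -/
def kIsNormalIdeal [Group G] [PartialOrder G] (φ : Equiv.Perm I) (n : ℤ)
    (J : Set (ℤ × (I → G))) : Prop :=
  kIsIdeal φ n J ∧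
  ∀ z ∈ kE n,
    {w | ∃ a ∈ J, kmul φ z a = w ∧ kle w (kunit n)} =
    {w | ∃ b ∈ J, kmul φ b z = w ∧ kle w (kunit n)}

section aux
variable [Group G] [PartialOrder G]
  [CovariantClass G G (· * ·) (· ≤ ·)] [CovariantClass G G (swap (· * ·)) (· ≤ ·)]

lemma kle_refl (a : ℤ × (I → G)) : kle a a := Or.inr ⟨rfl, fun _ => le_rfl⟩

lemma kle_trans {a b c : ℤ × (I → G)} (h1 : kle a b) (h2 : kle b c) : kle a c := by
  rcases h1 with h | ⟨h, h'⟩ <;> rcases h2 with g | ⟨g, g'⟩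
  · exact Or.inl (h.trans g)
  · exact Or.inl (lt_of_lt_of_le h g.le)
  · exact Or.inl (lt_of_le_of_lt h.le g)
  · exact Or.inr ⟨h.trans g, fun i => (h' i).trans (g' i)⟩

lemma kle_kunit {m n : ℤ} (h : m ≤ n) : kle (kunit (I := I) (G := G) m) (kunit n) :=
  h.lt_or_eq.imp id (fun e => ⟨e, fun _ => le_rfl⟩)

lemma mem_kEk0 {n : ℤ} (hn : 1 ≤ n) {z : ℤ × (I → G)} :
    z ∈ kEk n 0 ↔ z.1 = 0 ∧ ∀ i, 1 ≤ z.2 i := by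
  constructor
  · rintro ⟨⟨h1, _⟩, h0⟩
    refine ⟨h0, ?_⟩
    rcases h1 with h | ⟨_, h⟩
    · have h' : (0 : ℤ) < z.1 := h
      omega
    · exact h
  · rintro ⟨h0, h⟩
    refine ⟨⟨Or.inr ⟨h0.symm, h⟩, Or.inl ?_⟩, h0⟩
    show z.1 < n
    omega

lemma kmul_kunit (φ : Equiv.Perm I) (m l : ℤ) :
    kmul (G := G) φ (kunit m) (kunit l) = kunit (m + l) := by
  simp [kmul, kunit]

lemma kunit_mem_kE {m n : ℤ} (h0 : 0 ≤ m) (h1 : m ≤ n) :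
    kunit (I := I) (G := G) m ∈ kE n :=
  ⟨kle_kunit h0, kle_kunit h1⟩

/-- Key lemma: an ideal containing an element outside `E₀` is all of `E`. -/
lemma kIdeal_eq_kE (φ : Equiv.Perm I) {n : ℤ} (hn : 1 ≤ n)
    (hdir : ∀ a b : G, ∃ c, a ≤ c ∧ b ≤ c)
    {J : Set (ℤ × (I → G))} (hJ : kIsIdeal φ n J)
    {x : ℤ × (I → G)} (hx : x ∈ J) (hx0 : x ∉ kEk n 0) : J = kE n := by
  obtain ⟨-, hsub, hmul, hdc⟩ := hJ
  have hxE := hsub hx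
  have hx1 : 1 ≤ x.1 := by
    rcases hxE.1 with h | ⟨h, h'⟩
    · have h' : (0 : ℤ) < x.1 := h
      omega
    · exact absurd ((mem_kEk0 hn).mpr ⟨h.symm, h'⟩) hx0
  have hE0 : ∀ z : ℤ × (I → G), z ∈ kEk n 0 → z ∈ J := by
    intro z hz
    refine hdc z hz.1 x hx (Or.inl ?_)
    have := hz.2
    omega
  have hxn : x.1 ≤ n := by
    rcases hxE.2 with h | ⟨h, _⟩
    · have h' : x.1 < n := h
      omega
    · have h' : x.1 = n := h
      omega
  have hun : kunit n ∈ J := by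
    rcases lt_or_eq_of_le hxn with hlt | he
    · -- x.1 < n : first get kunit 1 ∈ J
      have hc : ∀ j, ∃ c : G, 1 ≤ c ∧ (x.2 (((φ ^ x.1)⁻¹) j))⁻¹ ≤ c := by
        intro j
        obtain ⟨c, h1, h2⟩ := hdir 1 (x.2 (((φ ^ x.1)⁻¹) j))⁻¹
        exact ⟨c, h1, h2⟩
      choose c hc1 hc2 using hc
      have haJ : ((0 : ℤ), c) ∈ J := hE0 _ ((mem_kEk0 hn).mpr ⟨rfl, hc1⟩)
      have hw : kmul φ x ((0 : ℤ), c) ∈ J := by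
        refine hmul x hx _ haJ (Or.inl ?_)
        show x.1 + 0 < n
        omega
      have hcomp : ∀ i, (1 : G) ≤ x.2 i * c ((φ ^ x.1) i) := by
        intro i
        have h2 := hc2 ((φ ^ x.1) i)
        rw [(show ∀ (f : Equiv.Perm I) (y : I), f⁻¹ (f y) = y from fun f y => f.symm_apply_apply y)] at h2
        calc (1 : G) = x.2 i * (x.2 i)⁻¹ := (mul_inv_cancel _).symm
          _ ≤ x.2 i * c ((φ ^ x.1) i) := mul_le_mul_right h2 _
      have hle1 : kle (kunit (I := I) (G := G) 1) (kmul φ x ((0 : ℤ), c)) := by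
        rcases lt_or_eq_of_le hx1 with h | h
        · exact Or.inl (by show (1 : ℤ) < x.1 + 0; omega)
        · exact Or.inr ⟨by show (1 : ℤ) = x.1 + 0; omega, fun i => hcomp i⟩
      have hu1 : kunit 1 ∈ J := hdc _ (kunit_mem_kE one_pos.le hn) _ hw hle1
      -- climb up
      have step : ∀ m : ℕ, (1 + m : ℤ) ≤ n → kunit (1 + (m : ℤ)) ∈ J := by
        intro m
        induction m with
        | zero => intro _; simpa using hu1
        | succ k ih =>
          intro hm
          have hk : (1 + (k : ℤ)) ≤ n := by push_cast at hm ⊢; omega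
          have hprod := hmul _ (ih hk) _ hu1
            (by rw [kmul_kunit]; exact kle_kunit (by push_cast at hm ⊢; omega))
          rw [kmul_kunit] at hprod
          have : (1 : ℤ) + (k : ℤ) + 1 = 1 + ((k : ℕ) + 1 : ℕ) := by push_cast; ring
          rwa [this] at hprod
      have := step (n - 1).toNat (by omega)
      rwa [show (1 + ((n - 1).toNat : ℤ)) = n by omega] at this
    · -- x.1 = n : multiply by inverse on the left
      have hy : ∀ i, x.2 i ≤ 1 := by
        rcases hxE.2 with h | ⟨_, h⟩
        · have h' : x.1 < n := h
          omega
        · exact h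
      have haJ : ((0 : ℤ), fun i => (x.2 i)⁻¹) ∈ J :=
        hE0 _ ((mem_kEk0 hn).mpr ⟨rfl, fun i => one_le_inv'.mpr (hy i)⟩)
      have hprod : kmul φ ((0 : ℤ), fun i => (x.2 i)⁻¹) x = kunit n := by
        simp only [kmul, kunit]
        refine Prod.ext ?_ ?_
        · show (0 : ℤ) + x.1 = n; omega
        · funext i
          show (x.2 i)⁻¹ * x.2 ((φ ^ (0 : ℤ)) i) = 1
          simp
      have := hmul _ haJ x hx (by rw [hprod]; exact kle_refl _)
      rwa [hprod] at this
  refine Set.Subset.antisymm hsub ?_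
  intro w hw
  exact hdc w hw (kunit n) hun hw.2

end aux



section aux2
variable [Group G] [PartialOrder G]
  [CovariantClass G G (· * ·) (· ≤ ·)] [CovariantClass G G (swap (· * ·)) (· ≤ ·)]

lemma kEk0_ideal (φ : Equiv.Perm I) {n : ℤ} (hn : 1 ≤ n) :
    kIsIdeal φ n (kEk (I := I) (G := G) n 0) := by
  refine ⟨⟨kone, (mem_kEk0 hn).mpr ⟨rfl, fun _ => le_rfl⟩⟩, fun z hz => hz.1, ?_, ?_⟩
  · intro a ha b hb _
    obtain ⟨ha0, ha1⟩ := (mem_kEk0 hn).mp ha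
    obtain ⟨hb0, hb1⟩ := (mem_kEk0 hn).mp hb
    refine (mem_kEk0 hn).mpr ⟨?_, fun i => one_le_mul (ha1 _) (hb1 _)⟩
    show a.1 + b.1 = 0
    omega
  · intro a haE b hb hab
    obtain ⟨hb0, _⟩ := (mem_kEk0 hn).mp hb
    have ha0 : a.1 = 0 := by
      rcases haE.1 with g | ⟨g, _⟩
      · have g' : (0 : ℤ) < a.1 := g
        rcases hab with h | ⟨h, _⟩
        · have h' : a.1 < b.1 := h
          omega
        · have h' : a.1 = b.1 := h
          omega
      · have g' : (0 : ℤ) = a.1 := g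
        omega
    have ha1 : ∀ i, 1 ≤ a.2 i := by
      rcases haE.1 with g | ⟨g, g'⟩
      · have g'' : (0 : ℤ) < a.1 := g
        omega
      · exact g'
    exact (mem_kEk0 hn).mpr ⟨ha0, ha1⟩

lemma kEk0_normal (φ : Equiv.Perm I) {n : ℤ} (hn : 1 ≤ n) :
    ∀ z ∈ kE (I := I) (G := G) n,
      {w | ∃ a ∈ kEk n 0, kmul φ z a = w ∧ kle w (kunit n)} =
      {w | ∃ b ∈ kEk n 0, kmul φ b z = w ∧ kle w (kunit n)} := by
  intro z _
  ext w
  simp only [Set.mem_setOf_eq]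
  constructor
  · rintro ⟨a, ha, rfl, hle⟩
    obtain ⟨ha0, ha1⟩ := (mem_kEk0 hn).mp ha
    refine ⟨((0 : ℤ), fun i => z.2 i * a.2 ((φ ^ z.1) i) * (z.2 i)⁻¹),
      (mem_kEk0 hn).mpr ⟨rfl, fun i => ?_⟩, ?_, hle⟩
    · calc (1 : G) = z.2 i * 1 * (z.2 i)⁻¹ := by group
        _ ≤ z.2 i * a.2 ((φ ^ z.1) i) * (z.2 i)⁻¹ :=
          mul_le_mul_left (mul_le_mul_right (ha1 _) _) _
    · simp only [kmul]
      refine Prod.ext ?_ ?_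
      · dsimp only
        omega
      · funext i
        dsimp only
        have h0 : ((φ ^ (0 : ℤ)) : Equiv.Perm I) i = i := by simp
        rw [h0, inv_mul_cancel_right]
  · rintro ⟨b, hb, rfl, hle⟩
    obtain ⟨hb0, hb1⟩ := (mem_kEk0 hn).mp hb
    refine ⟨((0 : ℤ), fun j => (z.2 ((φ ^ z.1)⁻¹ j))⁻¹ * b.2 ((φ ^ z.1)⁻¹ j) * z.2 ((φ ^ z.1)⁻¹ j)),
      (mem_kEk0 hn).mpr ⟨rfl, fun j => ?_⟩, ?_, hle⟩
    · calc (1 : G) = (z.2 ((φ ^ z.1)⁻¹ j))⁻¹ * 1 * z.2 ((φ ^ z.1)⁻¹ j) := by group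
        _ ≤ _ := mul_le_mul_left (mul_le_mul_right (hb1 _) _) _
    · simp only [kmul]
      refine Prod.ext ?_ ?_
      · dsimp only
        omega
      · funext i
        dsimp only
        have h0 : ((φ ^ (0 : ℤ)) : Equiv.Perm I) i = i := by simp
        rw [(show ∀ (f : Equiv.Perm I) (y : I), f⁻¹ (f y) = y from fun f y => f.symm_apply_apply y), hb0, h0]
        group

end aux2


/-- `E₀` is a normal ideal of `E`, `E₀ ≠ E`, every ideal containing an
element outside `E₀` equals `E`; consequently `E₀` is maximal and it is the unique
maximal ideal of `E` (maximal = proper, and every ideal properly containing it is `E`). -/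
theorem stmt9 [Group G] [PartialOrder G]
    [CovariantClass G G (· * ·) (· ≤ ·)] [CovariantClass G G (swap (· * ·)) (· ≤ ·)]
    (hdir : ∀ a b : G, ∃ c, a ≤ c ∧ b ≤ c)
    (φ : Equiv.Perm I) (n : ℤ) (hn : 1 ≤ n) :
    kIsNormalIdeal φ n (kEk (I := I) (G := G) n 0) ∧
    kEk (I := I) (G := G) n 0 ≠ kE n ∧
    (∀ J : Set (ℤ × (I → G)), kIsIdeal φ n J → (∃ x ∈ J, x ∉ kEk n 0) → J = kE n) ∧
    (kEk (I := I) (G := G) n 0 ≠ kE n ∧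
      ∀ J' : Set (ℤ × (I → G)), kIsIdeal φ n J' → kEk n 0 ⊂ J' → J' = kE n) ∧
    (∀ J : Set (ℤ × (I → G)), kIsIdeal φ n J → J ≠ kE n →
      (∀ J' : Set (ℤ × (I → G)), kIsIdeal φ n J' → J ⊂ J' → J' = kE n) →
      J = kEk n 0) := by
  have hE0ideal : kIsIdeal φ n (kEk (I := I) (G := G) n 0) := kEk0_ideal φ hn
  have hneq : kEk (I := I) (G := G) n 0 ≠ kE n := by
    intro h
    have hm : kunit (I := I) (G := G) n ∈ kE n := kunit_mem_kE (by omega) le_rfl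
    have h0 : (kunit (I := I) (G := G) n).1 = 0 := ((mem_kEk0 hn).mp (h ▸ hm)).1
    have : n = 0 := h0
    omega
  have key : ∀ J : Set (ℤ × (I → G)), kIsIdeal φ n J →
      (∃ x ∈ J, x ∉ kEk n 0) → J = kE n := by
    rintro J hJ ⟨x, hx, hx0⟩
    exact kIdeal_eq_kE φ hn hdir hJ hx hx0
  refine ⟨⟨hE0ideal, kEk0_normal φ hn⟩, hneq, key, ⟨hneq, ?_⟩, ?_⟩
  · intro J' hJ' hss
    exact key J' hJ' (Set.not_subset.mp hss.2)
  · intro J hJ hJne hmax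
    have hsubE0 : J ⊆ kEk n 0 := by
      intro x hx
      by_contra hx0
      exact hJne (key J hJ ⟨x, hx, hx0⟩)
    by_cases h : J = kEk n 0
    · exact h
    · exact absurd (hmax _ hE0ideal (hsubE0.ssubset_of_ne h)) hneq
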